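/- Let A be a unital C*-algebra that is generated, as a norm-closed *-subalgebra containing the unit, by N self-adjoint elements. Then for every integer M ≥ N, there exist invertible self-adjoint elements b_1, …, b_M ∈ A with pairwise disjoint spectra such that A is generated, as a norm-closed *-subalgebra containing the unit, by b_1, …, b_M. -/
import Mathlib


theorem exists_invertible_selfAdjoint_generators_disjoint_spectra
    {A : Type*} [CStarAlgebra A] (N : ℕ) (c : Fin N → A)
    (hsa : ∀ l, IsSelfAdjoint (c l))
    (hgen : (StarAlgebra.adjoin ℂ (Set.range c)).topologicalClosure = ⊤) :
    ∀ M : ℕ, N ≤ M → ∃ b : Fin M → A,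
      (∀ l, IsSelfAdjoint (b l)) ∧ (∀ l, IsUnit (b l)) ∧
      (∀ l l', l ≠ l' → spectrum ℂ (b l) ∩ spectrum ℂ (b l') = ∅) ∧
      (StarAlgebra.adjoin ℂ (Set.range b)).topologicalClosure = ⊤ := by
  intro M hNM
  rcases subsingleton_or_nontrivial A with hA | hA
  · refine ⟨fun _ => 1, fun l => IsSelfAdjoint.one A, fun l => isUnit_one, ?_, ?_⟩
    · intro l l' _
      have : spectrum ℂ (1 : A) = ∅ := by
        ext μ; simp [spectrum.mem_iff, isUnit_of_subsingleton]
      simp [this]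
    · rw [eq_top_iff]
      intro x _
      rw [Subsingleton.elim x 0]
      exact zero_mem _
  set c' : Fin M → A := fun l => if h : (l : ℕ) < N then c ⟨l, h⟩ else 0 with hc'
  have hsa' : ∀ l, IsSelfAdjoint (c' l) := by
    intro l
    by_cases h : (l : ℕ) < N <;> simp [hc', h, hsa]
  set s : Fin M → ℝ := fun l => (4 * (1 + ‖c' l‖))⁻¹ with hs
  have hspos : ∀ l, 0 < s l := by
    intro l
    have : 0 ≤ ‖c' l‖ := norm_nonneg _
    rw [hs]; positivity
  set t : Fin M → ℝ := fun l => (l : ℕ) + 1 with ht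
  set b : Fin M → A := fun l => (s l : ℂ) • c' l + ((t l : ℝ) : ℂ) • 1 with hb
  have hbound : ∀ l, ∀ μ ∈ spectrum ℂ (b l), ‖μ - ((t l : ℝ) : ℂ)‖ ≤ 1 / 4 := by
    intro l μ hμ
    have hre : b l = (s l : ℂ) • c' l + algebraMap ℂ A ((t l : ℝ) : ℂ) := by
      rw [hb, Algebra.algebraMap_eq_smul_one]
    rw [hre, ← spectrum.add_singleton_eq] at hμ
    obtain ⟨ν, hν, r, hr, rfl⟩ := hμ
    rw [Set.mem_singleton_iff] at hr
    subst hr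
    have h1 : ‖ν‖ ≤ ‖(s l : ℂ) • c' l‖ := spectrum.norm_le_norm_of_mem hν
    have h2 : ‖(s l : ℂ) • c' l‖ = s l * ‖c' l‖ := by
      rw [norm_smul, Complex.norm_real, Real.norm_eq_abs, abs_of_pos (hspos l)]
    have h3 : s l * ‖c' l‖ ≤ 1 / 4 := by
      rw [hs, inv_mul_le_iff₀ (by positivity)]
      have : 0 ≤ ‖c' l‖ := norm_nonneg _
      nlinarith
    rw [h2] at h1
    simp only [add_sub_cancel_right]
    linarith
  have htnorm : ∀ l, ‖((t l : ℝ) : ℂ)‖ = t l := by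
    intro l
    rw [Complex.norm_real, Real.norm_eq_abs, abs_of_pos]
    rw [ht]; positivity
  have hb0 : ∀ l, (0 : ℂ) ∉ spectrum ℂ (b l) := by
    intro l h0
    have h1 := hbound l 0 h0
    rw [zero_sub, norm_neg, htnorm l] at h1
    have h2 : (1 : ℝ) ≤ t l := by
      rw [ht]; have := (l : ℕ).cast_nonneg (α := ℝ); simp
    have : (1 : ℝ) ≤ 1 / 4 := le_trans h2 h1
    norm_num at this
  refine ⟨b, ?_, ?_, ?_, ?_⟩
  · intro l
    have hreal : ∀ r : ℝ, IsSelfAdjoint ((r : ℂ)) := fun r => Complex.conj_ofReal r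
    exact (((hreal (s l)).smul (hsa' l)).add ((hreal (t l)).smul (IsSelfAdjoint.one A)))
  · intro l
    exact (spectrum.zero_notMem_iff ℂ).mp (hb0 l)
  · intro l l' hll'
    ext μ
    simp only [Set.mem_inter_iff, Set.mem_empty_iff_false, iff_false, not_and]
    intro h1 h2
    have e1 := hbound l μ h1
    have e2 := hbound l' μ h2
    have key : (1 : ℝ) ≤ ‖((t l : ℝ) : ℂ) - ((t l' : ℝ) : ℂ)‖ := by
      have hne : ((l : ℕ) : ℤ) - ((l' : ℕ) : ℤ) ≠ 0 := by
        intro h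
        exact hll' (Fin.ext (by omega))
      have h4 : (1 : ℝ) ≤ |((l : ℕ) : ℝ) - ((l' : ℕ) : ℝ)| := by
        exact_mod_cast Int.one_le_abs hne
      have : ((t l : ℝ) : ℂ) - ((t l' : ℝ) : ℂ)
          = ((((l : ℕ) : ℝ) - ((l' : ℕ) : ℝ) : ℝ) : ℂ) := by
        rw [ht]; push_cast; ring
      rw [this, Complex.norm_real, Real.norm_eq_abs]
      exact h4
    have tri := norm_sub_le_norm_sub_add_norm_sub ((t l : ℝ) : ℂ) μ ((t l' : ℝ) : ℂ)
    rw [norm_sub_rev ((t l : ℝ) : ℂ) μ] at tri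
    linarith
  · rw [eq_top_iff, ← hgen]
    apply StarSubalgebra.topologicalClosure_mono
    apply StarAlgebra.adjoin_le
    rintro _ ⟨j, rfl⟩
    have hj : (j : ℕ) < M := lt_of_lt_of_le j.2 hNM
    have hcj : c j = c' ⟨j, hj⟩ := by simp [hc']
    rw [hcj]
    set l : Fin M := ⟨j, hj⟩
    have hmem : b l ∈ StarAlgebra.adjoin ℂ (Set.range b) :=
      StarAlgebra.subset_adjoin ℂ _ ⟨l, rfl⟩
    have : c' l = ((s l)⁻¹ : ℝ) • (b l - ((t l : ℝ) : ℂ) • 1) := by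
      rw [hb]
      simp only [add_sub_cancel_right, Complex.coe_smul, smul_smul,
        inv_mul_cancel₀ (hspos l).ne', one_smul]
    rw [this, ← Complex.coe_smul]
    exact SMulMemClass.smul_mem _ (sub_mem hmem (SMulMemClass.smul_mem _ (one_mem _)))
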